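/- For each partition σ = (σ_1,...,σ_{n-1}) fitting in an (n-1)×k box, the k-tuple x^σ with x^σ_j = z^{1/n} ζ^{|σ|/n} ζ^{I_j(σ^t)}, where ζ = exp(2πi/(k+n)) and I_j(σ^t) = (k+1)/2 + σ^t_{k+1-j} - (k+1-j), solves the Bethe ansatz equations x_1^{n+k} = ⋯ = x_k^{n+k} = z(-1)^{k-1} ∏_{i=1}^k x_i. -/

import Mathlib

open Finset

set_option linter.unusedVariables false

private lemma bethe_aux (n k : ℕ) (hn : 2 ≤ n) (hk : 1 ≤ k)
    (z zr : ℂ) (hzr : zr ^ n = z)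
    (σ : Fin (n - 1) → ℕ) (hσk : ∀ i, σ i ≤ k)
    (σt : Fin k → ℕ)
    (hσt : ∀ j : Fin k, σt j = (Finset.univ.filter fun i : Fin (n - 1) => (j : ℕ) < σ i).card)
    (ζpow : ℚ → ℂ)
    (hζ : ∀ w : ℚ, ζpow w = Complex.exp (2 * Real.pi * Complex.I * (w : ℂ) / ((k : ℂ) + (n : ℂ))))
    (Iexp : Fin k → ℚ)
    (hI : ∀ j : Fin k, Iexp j = ((k : ℚ) + 1) / 2 + (σt j.rev : ℚ) - ((k : ℚ) - (j : ℚ)))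
    (j : Fin k) :
    (zr * ζpow ((∑ i, σ i : ℕ) / (n : ℚ)) * ζpow (Iexp j)) ^ (n + k)
      = z * (-1) ^ (k - 1)
        * ∏ i, (zr * ζpow ((∑ i, σ i : ℕ) / (n : ℚ)) * ζpow (Iexp i)) := by
  have hnQ : (n : ℚ) ≠ 0 := Nat.cast_ne_zero.mpr (by omega)

  have hNC : ((k : ℂ) + n) ≠ 0 := by
    have : ((k : ℂ) + n) = ((k + n : ℕ) : ℂ) := by push_cast; ring
    rw [this]
    exact Nat.cast_ne_zero.mpr (by omega)
  -- basic ζpow facts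
  have hmul : ∀ a b : ℚ, ζpow (a + b) = ζpow a * ζpow b := by
    intro a b
    simp only [hζ]
    rw [← Complex.exp_add]
    congr 1
    push_cast
    ring
  have hpow : ∀ (a : ℚ) (m : ℕ), ζpow a ^ m = ζpow (m * a) := by
    intro a m
    simp only [hζ]
    rw [← Complex.exp_nat_mul]
    congr 1
    push_cast
    ring
  have hfull : ∀ a : ℚ, ζpow (((k : ℚ) + n) * a)
      = Complex.exp (2 * Real.pi * Complex.I * (a : ℂ)) := by
    intro a
    simp only [hζ]
    congr 1
    push_cast
    field_simp
  have hone : ∀ m : ℤ, Complex.exp (2 * Real.pi * Complex.I * (m : ℂ)) = 1 := by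
    intro m
    rw [show (2 * (Real.pi : ℂ) * Complex.I * (m : ℂ)) = (m : ℂ) * (2 * Real.pi * Complex.I) by
      ring]
    exact Complex.exp_int_mul_two_pi_mul_I m
  have hhalf : Complex.exp (2 * Real.pi * Complex.I * (((((k : ℚ) + 1) / 2 : ℚ)) : ℂ))
      = (-1 : ℂ) ^ (k + 1) := by
    rw [show (2 * (Real.pi : ℂ) * Complex.I * (((((k : ℚ) + 1) / 2 : ℚ)) : ℂ))
        = ((k + 1 : ℕ) : ℂ) * (Real.pi * Complex.I) by push_cast; ring]
    rw [Complex.exp_nat_mul, Complex.exp_pi_mul_I]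
  -- combinatorial sums
  have hcard : ∀ m : ℕ, m ≤ k →
      (Finset.univ.filter fun j : Fin k => (j : ℕ) < m).card = m := by
    intro m hm
    rw [Finset.card_filter]
    rw [Fin.sum_univ_eq_sum_range (fun j => if j < m then 1 else 0) k]
    rw [← Finset.card_filter]
    have : (Finset.range k).filter (fun j => j < m) = Finset.range m := by
      ext a
      simp only [Finset.mem_filter, Finset.mem_range]
      omega
    rw [this, Finset.card_range]
  have hsum_t : ∑ i : Fin k, σt i = ∑ i, σ i := by
    simp only [hσt, Finset.card_filter]
    rw [Finset.sum_comm]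
    refine Finset.sum_congr rfl fun i _ => ?_
    rw [← Finset.card_filter]
    exact hcard (σ i) (hσk i)
  have hrev : ∑ i : Fin k, ((σt i.rev : ℕ) : ℚ) = ((∑ i, σ i : ℕ) : ℚ) := by
    rw [← hsum_t]
    push_cast
    exact Equiv.sum_comp Fin.revPerm fun i => ((σt i : ℕ) : ℚ)
  have hgauss : (∑ i : Fin k, ((i : ℕ) : ℚ)) = (k : ℚ) * ((k : ℚ) - 1) / 2 := by
    rw [Fin.sum_univ_eq_sum_range (fun i => ((i : ℕ) : ℚ)) k]
    have h2 := Finset.sum_range_id_mul_two k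
    have h3 := congrArg (Nat.cast : ℕ → ℚ) h2
    push_cast [Nat.cast_sub hk] at h3
    linarith
  have hsum_I : ∑ i, Iexp i = ((∑ i, σ i : ℕ) : ℚ) := by
    have hre : ∀ i : Fin k, Iexp i
        = ((σt i.rev : ℕ) : ℚ) + ((((k : ℚ) + 1) / 2 - (k : ℚ)) + ((i : ℕ) : ℚ)) := by
      intro i
      simp only [hI]
      ring
    rw [Finset.sum_congr rfl fun i _ => hre i, Finset.sum_add_distrib, hrev,
      Finset.sum_add_distrib, Finset.sum_const, Finset.card_univ, Fintype.card_fin, hgauss]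
    rw [nsmul_eq_mul]
    ring
  -- product of the tuple
  have hprodz : ∏ i, ζpow (Iexp i) = ζpow (∑ i, Iexp i) := by
    simp only [hζ]
    rw [← Complex.exp_sum]
    congr 1
    push_cast
    rw [Finset.mul_sum, Finset.sum_div]
  set S : ℕ := ∑ i, σ i with hS
  set sn : ℚ := (S : ℚ) / n with hsn
  set W : ℂ := Complex.exp (2 * Real.pi * Complex.I * ((S : ℂ) / (n : ℂ))) with hW
  have e1 : ζpow (((n + k : ℕ) : ℚ) * Iexp j) = (-1 : ℂ) ^ (k + 1) := by
    rw [show ((n + k : ℕ) : ℚ) * Iexp j = ((k : ℚ) + n) * Iexp j by push_cast; ring, hfull]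
    have hsplit : ((Iexp j : ℚ) : ℂ)
        = (((((k : ℚ) + 1) / 2 : ℚ)) : ℂ)
          + (((σt j.rev : ℤ) - (k : ℤ) + ((j : ℕ) : ℤ) : ℤ) : ℂ) := by
      simp only [hI]
      push_cast
      ring
    rw [hsplit, mul_add, Complex.exp_add, hhalf, hone, mul_one]
  have e2 : ζpow (((n + k : ℕ) : ℚ) * sn) = W := by
    rw [show ((n + k : ℕ) : ℚ) * sn = ((k : ℚ) + n) * sn by push_cast; ring, hfull, hW]
    congr 1
    rw [hsn]
    push_cast
    ring
  have e3 : ζpow ((k : ℚ) * sn) * ζpow (∑ i, Iexp i) = W := by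
    rw [← hmul, hsum_I]
    have : (k : ℚ) * sn + (S : ℚ) = ((k : ℚ) + n) * sn := by
      rw [hsn]
      field_simp
    rw [this, hfull, hW]
    congr 1
    rw [hsn]
    push_cast
    ring
  have hP : ∏ i, (zr * ζpow sn * ζpow (Iexp i)) = zr ^ k * ζpow ((k : ℚ) * sn) * ζpow (∑ i, Iexp i) := by
    rw [Finset.prod_mul_distrib, Finset.prod_const, Finset.card_univ, Fintype.card_fin,
      hprodz, mul_pow, hpow]
  calc (zr * ζpow sn * ζpow (Iexp j)) ^ (n + k)
      = zr ^ (n + k) * ζpow (((n + k : ℕ) : ℚ) * sn) * ζpow (((n + k : ℕ) : ℚ) * Iexp j) := by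
        rw [mul_pow, mul_pow, hpow, hpow]
    _ = z * zr ^ k * W * (-1 : ℂ) ^ (k + 1) := by
        rw [e1, e2, pow_add, hzr]
    _ = z * (-1 : ℂ) ^ (k - 1) * (zr ^ k * ζpow ((k : ℚ) * sn) * ζpow (∑ i, Iexp i)) := by
        rw [mul_assoc (zr ^ k), e3]
        obtain ⟨k', rfl⟩ : ∃ k', k = k' + 1 := ⟨k - 1, by omega⟩
        simp only [Nat.add_sub_cancel, pow_succ]
        ring
    _ = z * (-1 : ℂ) ^ (k - 1) * ∏ i, (zr * ζpow sn * ζpow (Iexp i)) := by rw [hP]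



/-- For each partition `σ` in the `(n-1)×k` box, the `k`-tuple
`x^σ_j = z^{1/n} ζ^{|σ|/n} ζ^{I_j(σ^t)}`, with `ζ = exp(2πi/(k+n))` and
`I_j(σ^t) = (k+1)/2 + σ^t_{k+1-j} - (k+1-j)` (where `σ^t` is the transpose
partition, `σ^t_j = #{i : σ_i ≥ j}`), solves the Bethe ansatz equations
`x_1^{n+k} = ⋯ = x_k^{n+k} = z(-1)^{k-1} ∏_i x_i`.
Here `zr` is a chosen `n`-th root of `z` and fractional powers of `ζ` are
`ζ^w := exp(2πi w/(k+n))`. -/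
theorem bethe_roots_solve_BAE (n k : ℕ) (hn : 2 ≤ n) (hk : 1 ≤ k)
    (z zr : ℂ) (hz : z ≠ 0) (hzr : zr ^ n = z)
    (σ : Fin (n - 1) → ℕ) (hσ : Antitone σ) (hσk : ∀ i, σ i ≤ k) :
    letI σt : Fin k → ℕ := fun j =>
      (Finset.univ.filter fun i : Fin (n - 1) => (j : ℕ) < σ i).card
    letI ζpow : ℚ → ℂ := fun w =>
      Complex.exp (2 * Real.pi * Complex.I * (w : ℂ) / ((k : ℂ) + (n : ℂ)))
    letI Iexp : Fin k → ℚ := fun j =>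
      ((k : ℚ) + 1) / 2 + (σt j.rev : ℚ) - ((k : ℚ) - (j : ℚ))
    letI x : Fin k → ℂ := fun j => zr * ζpow ((∑ i, σ i : ℕ) / (n : ℚ)) * ζpow (Iexp j)
    ∀ j : Fin k, x j ^ (n + k) = z * (-1) ^ (k - 1) * ∏ i, x i := by
  intro j
  exact bethe_aux n k hn hk z zr hzr σ hσk _ (fun _ => rfl) _ (fun _ => rfl) _ (fun _ => rfl) j
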